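/- In the clique-interdiction flow construction: for every x ∈ X* and every path P' with x_{P'} = 1 and a_s, a_t ∈ P', the set R := {v ∈ V : a_v¹ ∈ P'} satisfies |R| = r and R ∩ C ≠ ∅ for every clique C ∈ 𝒞_ℓ(G). -/

import Mathlib

open scoped BigOperators

/-- A directed multigraph: arcs `A` with tail and head maps into a vertex type `V`. -/
structure MultiDigraph (V : Type) (A : Type) where
  tail : A → V
  head : A → V

namespace MultiDigraph

variable {V A : Type}

/-- `p` is (the arc list of) a simple directed `s`-`t`-path in `D`. -/
def IsPath (D : MultiDigraph V A) (s t : V) (p : List A) : Prop :=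
  p ≠ [] ∧ List.Chain' (fun a b => D.head a = D.tail b) p ∧
    (p.map D.tail).head? = some s ∧ (p.map D.head).getLast? = some t ∧
    (p.map D.tail ++ [t]).Nodup

/-- The set of simple `s`-`t`-paths of `D`. -/
def pathSet (D : MultiDigraph V A) (s t : V) : Set (List A) := {p | D.IsPath s t p}

/-- `x` is a feasible `s`-`t` path flow with respect to capacities `u`. -/
def IsFlow (D : MultiDigraph V A) (s t : V) (u : A → ℚ) (x : List A → ℚ) : Prop :=
  (∀ p, 0 ≤ x p) ∧ (∀ p, x p ≠ 0 → D.IsPath s t p) ∧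
    ∀ a : A, (∑ᶠ p ∈ {p : List A | D.IsPath s t p ∧ a ∈ p}, x p) ≤ u a

/-- The value of a path flow. -/
noncomputable def value (D : MultiDigraph V A) (s t : V) (x : List A → ℚ) : ℚ :=
  ∑ᶠ p ∈ D.pathSet s t, x p

/-- `λ(x,S)`: the amount of flow on paths meeting `S`. -/
noncomputable def loss (D : MultiDigraph V A) (s t : V) (x : List A → ℚ) (S : Set A) : ℚ :=
  ∑ᶠ p ∈ {p : List A | D.IsPath s t p ∧ ∃ a ∈ S, a ∈ p}, x p

/-- The amount of flow surviving the failure of `S`. -/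
noncomputable def survival (D : MultiDigraph V A) (s t : V) (x : List A → ℚ) (S : Set A) : ℚ :=
  ∑ᶠ p ∈ {p : List A | D.IsPath s t p ∧ ∀ a ∈ S, a ∉ p}, x p

/-- A feasible multicommodity path flow meeting all demands exactly. -/
def IsMultiFlow {K : Type} (D : MultiDigraph V A) (u : A → ℚ)
    (src snk : K → V) (dem : K → ℚ) (x : K → List A → ℚ) : Prop :=
  (∀ i p, 0 ≤ x i p) ∧ (∀ i p, x i p ≠ 0 → D.IsPath (src i) (snk i) p) ∧
    (∀ a : A,
      (∑ᶠ i : K, ∑ᶠ p ∈ {p : List A | D.IsPath (src i) (snk i) p ∧ a ∈ p}, x i p) ≤ u a) ∧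
    (∀ i : K, (∑ᶠ p ∈ D.pathSet (src i) (snk i), x i p) = dem i)

/-- `λ(x,S)` for a multicommodity flow. -/
noncomputable def multiLoss {K : Type} (D : MultiDigraph V A)
    (src snk : K → V) (x : K → List A → ℚ) (S : Set A) : ℚ :=
  ∑ᶠ i : K, ∑ᶠ p ∈ {p : List A | D.IsPath (src i) (snk i) p ∧ ∃ a ∈ S, a ∈ p}, x i p

end MultiDigraph

/-- `S` is a legal failure scenario for compatibility graph `H` and budget `k`:
a clique of `H` of cardinality at most `k`. -/
def cliqueScenario {A : Type} (H : SimpleGraph A) (k : ℕ) (S : Set A) : Prop :=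
  S.Finite ∧ S.ncard ≤ k ∧ H.IsClique S

section CliqueInterdiction

/-- Nodes of the clique-interdiction flow construction. -/
inductive CNode (n : ℕ) : Type
  | s | s0 | s1 | t0 | t1 | t
  | v (i : Fin (n + 1))
  | y (i : Fin n) (b : Bool)
  | z (i : Fin n) (b : Bool)

/-- Arcs of the clique-interdiction flow construction (all of capacity 1);
`b = false` stands for superscript `0` and `b = true` for superscript `1`;
the bundle `A_{st}` has `k − 2 = ℓ − 1` arcs. -/
inductive CArc (n r ℓ : ℕ) : Type
  | as                          -- a_s = (s, v_1)
  | at'                         -- a_t = (v_{n+1}, t)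
  | vy (i : Fin n) (b : Bool)   -- (v_i, y_i^b)
  | yz (i : Fin n) (b : Bool)   -- a^b_{v_i} = (y_i^b, z_i^b)
  | zv (i : Fin n) (b : Bool)   -- (z_i^b, v_{i+1})
  | as0 (j : Fin r)             -- bundle A_s⁰: (s, s⁰)
  | at0 (j : Fin r)             -- bundle A_t⁰: (t⁰, t)
  | s0y (i : Fin n)             -- (s⁰, y_i⁰)
  | zt0 (i : Fin n)             -- (z_i⁰, t⁰)
  | as1 (j : Fin (n - r))       -- bundle A_s¹: (s, s¹)
  | at1 (j : Fin (n - r))       -- bundle A_t¹: (t¹, t)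
  | s1y (i : Fin n)             -- (s¹, y_i¹)
  | zt1 (i : Fin n)             -- (z_i¹, t¹)
  | ast (j : Fin (ℓ - 1))       -- bundle A_{st}: (s, t)

variable (n r ℓ : ℕ)

/-- The digraph of the clique-interdiction flow construction. -/
def cD : MultiDigraph (CNode n) (CArc n r ℓ) where
  tail a :=
    match a with
    | .as => .s
    | .at' => .v (Fin.last n)
    | .vy i _ => .v i.castSucc
    | .yz i b => .y i b
    | .zv i b => .z i b
    | .as0 _ => .s
    | .at0 _ => .t0
    | .s0y _ => .s0
    | .zt0 i => .z i false
    | .as1 _ => .s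
    | .at1 _ => .t1
    | .s1y _ => .s1
    | .zt1 i => .z i true
    | .ast _ => .s
  head a :=
    match a with
    | .as => .v 0
    | .at' => .t
    | .vy i b => .y i b
    | .yz i b => .z i b
    | .zv i _ => .v i.succ
    | .as0 _ => .s0
    | .at0 _ => .t
    | .s0y i => .y i false
    | .zt0 _ => .t0
    | .as1 _ => .s1
    | .at1 _ => .t
    | .s1y i => .y i true
    | .zt1 _ => .t1
    | .ast _ => .t

/-- The set `S̄ := A_{st} ∪ {a_s, a_t}`. -/
def inSbar : CArc n r ℓ → Prop
  | .as => True
  | .at' => True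
  | .ast _ => True
  | _ => False

/-- The compatibility graph of the clique-interdiction flow construction:
`{a_v¹, a_w¹}` for every edge `{v,w}` of `G`, `{a_s, a_v¹}` for every vertex `v`,
and all 2-element subsets of `S̄`. -/
def cH (G : SimpleGraph (Fin n)) : SimpleGraph (CArc n r ℓ) :=
  SimpleGraph.fromRel (fun x y =>
    (∃ i j : Fin n, G.Adj i j ∧ x = CArc.yz i true ∧ y = CArc.yz j true) ∨
    (∃ i : Fin n, x = CArc.as ∧ y = CArc.yz i true) ∨
    (inSbar n r ℓ x ∧ inSbar n r ℓ y))

/-- Membership in `X*`: an integral `s`-`t` path flow of value `θ = n + ℓ` (unit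
capacities) with `λ(x,S) ≤ k − 1 = ℓ` for every clique scenario `S ∈ S_{H,k}`,
`k = ℓ + 1`. -/
def memXstar (G : SimpleGraph (Fin n)) (x : List (CArc n r ℓ) → ℚ) : Prop :=
  (cD n r ℓ).IsFlow CNode.s CNode.t (fun _ => 1) x ∧
  (∀ p, ∃ zp : ℤ, x p = (zp : ℚ)) ∧
  (cD n r ℓ).value CNode.s CNode.t x = (n : ℚ) + (ℓ : ℚ) ∧
  (∀ S : Set (CArc n r ℓ), cliqueScenario (cH n r ℓ G) (ℓ + 1) S →
    (cD n r ℓ).loss CNode.s CNode.t x S ≤ (ℓ : ℚ))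

end CliqueInterdiction
section CIAuxPath
open MultiDigraph
variable {V A : Type} {D : MultiDigraph V A} {s t : V} {p : List A}

theorem CIA.nodup_tails (h : D.IsPath s t p) : (p.map D.tail).Nodup :=
  (List.nodup_append.mp h.2.2.2.2).1

theorem CIA.t_not_mem_tails (h : D.IsPath s t p) : t ∉ p.map D.tail := by
  have h5 := (List.nodup_append.mp h.2.2.2.2).2.2
  exact fun hmem => h5 t hmem t (by simp) rfl

theorem CIA.tail_injOn (h : D.IsPath s t p) {a b : A} (ha : a ∈ p) (hb : b ∈ p)
    (hab : D.tail a = D.tail b) : a = b :=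
  List.inj_on_of_nodup_map (CIA.nodup_tails h) ha hb hab

theorem CIA.exists_succ (h : D.IsPath s t p) {a : A} (ha : a ∈ p) (hat : D.head a ≠ t) :
    ∃ b ∈ p, D.tail b = D.head a := by
  obtain ⟨i, hi, rfl⟩ := List.mem_iff_getElem.mp ha
  by_cases hlt : i + 1 < p.length
  · refine ⟨p[i+1], List.getElem_mem _, ?_⟩
    have := List.isChain_iff_getElem.mp h.2.1 i (by omega)
    simpa [List.get_eq_getElem] using this.symm
  · exfalso
    apply hat
    have h4 := h.2.2.2.1
    have hne : p.map D.head ≠ [] := by simp [h.1]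
    rw [List.getLast?_eq_getLast hne, Option.some_inj] at h4
    rw [List.getLast_eq_getElem] at h4
    have hi' : i = p.length - 1 := by omega
    subst hi'
    simpa using h4

theorem CIA.exists_pred (h : D.IsPath s t p) {a : A} (ha : a ∈ p) (has : D.tail a ≠ s) :
    ∃ b ∈ p, D.head b = D.tail a := by
  obtain ⟨i, hi, rfl⟩ := List.mem_iff_getElem.mp ha
  rcases Nat.eq_zero_or_pos i with h0 | h0
  · subst h0
    exfalso; apply has
    cases p with
    | nil => simp at hi
    | cons c l =>
      have h3 := h.2.2.1
      simp at h3
      simpa using h3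
  · obtain ⟨j, rfl⟩ : ∃ j, i = j + 1 := ⟨i - 1, by omega⟩
    refine ⟨p[j], List.getElem_mem _, ?_⟩
    have := List.isChain_iff_getElem.mp h.2.1 j (by omega)
    simpa [List.get_eq_getElem] using this

theorem CIA.head_t_unique (h : D.IsPath s t p) {a b : A} (ha : a ∈ p) (hb : b ∈ p)
    (ha' : D.head a = t) (hb' : D.head b = t) : a = b := by
  have key : ∀ c ∈ p, D.head c = t → ∀ (i : ℕ) (hi : i < p.length), p[i] = c → i = p.length - 1 := by
    intro c hc hct i hi hic
    by_contra hne
    have hlt : i + 1 < p.length := by omega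
    have hch := List.isChain_iff_getElem.mp h.2.1 i (by omega)
    apply CIA.t_not_mem_tails h
    rw [List.mem_map]
    refine ⟨p[i+1], List.getElem_mem _, ?_⟩
    have h2 : D.head p[i] = D.tail p[i+1] := by simpa [List.get_eq_getElem] using hch
    rw [← h2, hic, hct]
  obtain ⟨i, hi, hia⟩ := List.mem_iff_getElem.mp ha
  obtain ⟨j, hj, hjb⟩ := List.mem_iff_getElem.mp hb
  have h1 := key a ha ha' i hi hia
  have h2 := key b hb hb' j hj hjb
  rw [← hia, ← hjb]
  congr 1
  omega

theorem CIA.first_arc (h : D.IsPath s t p) : ∃ a ∈ p, D.tail a = s := by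
  cases p with
  | nil => exact absurd rfl h.1
  | cons c l =>
    refine ⟨c, by simp, ?_⟩
    have h3 := h.2.2.1
    simpa using h3

end CIAuxPath
section CIArc

open MultiDigraph

variable {n r ℓ : ℕ}

instance : Inhabited (CArc n r ℓ) := ⟨CArc.as⟩

private def CIA.decode :
    (Unit ⊕ Unit ⊕ (Fin n × Bool) ⊕ (Fin n × Bool) ⊕ (Fin n × Bool) ⊕ Fin r ⊕ Fin r ⊕
      Fin n ⊕ Fin n ⊕ Fin (n - r) ⊕ Fin (n - r) ⊕ Fin n ⊕ Fin n ⊕ Fin (ℓ - 1)) →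
      CArc n r ℓ
  | .inl _ => .as
  | .inr (.inl _) => .at'
  | .inr (.inr (.inl (i, b))) => .vy i b
  | .inr (.inr (.inr (.inl (i, b)))) => .yz i b
  | .inr (.inr (.inr (.inr (.inl (i, b))))) => .zv i b
  | .inr (.inr (.inr (.inr (.inr (.inl j))))) => .as0 j
  | .inr (.inr (.inr (.inr (.inr (.inr (.inl j)))))) => .at0 j
  | .inr (.inr (.inr (.inr (.inr (.inr (.inr (.inl i))))))) => .s0y i
  | .inr (.inr (.inr (.inr (.inr (.inr (.inr (.inr (.inl i)))))))) => .zt0 i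
  | .inr (.inr (.inr (.inr (.inr (.inr (.inr (.inr (.inr (.inl j))))))))) => .as1 j
  | .inr (.inr (.inr (.inr (.inr (.inr (.inr (.inr (.inr (.inr (.inl j)))))))))) => .at1 j
  | .inr (.inr (.inr (.inr (.inr (.inr (.inr (.inr (.inr (.inr (.inr (.inl i))))))))))) => .s1y i
  | .inr (.inr (.inr (.inr (.inr (.inr (.inr (.inr (.inr (.inr (.inr (.inr (.inl i)))))))))))) => .zt1 i
  | .inr (.inr (.inr (.inr (.inr (.inr (.inr (.inr (.inr (.inr (.inr (.inr (.inr j)))))))))))) => .ast j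

instance : Finite (CArc n r ℓ) := by
  apply Finite.of_surjective (CIA.decode (n := n) (r := r) (ℓ := ℓ))
  intro a
  cases a with
  | as => exact ⟨.inl (), rfl⟩
  | at' => exact ⟨.inr (.inl ()), rfl⟩
  | vy i b => exact ⟨.inr (.inr (.inl (i, b))), rfl⟩
  | yz i b => exact ⟨.inr (.inr (.inr (.inl (i, b)))), rfl⟩
  | zv i b => exact ⟨.inr (.inr (.inr (.inr (.inl (i, b))))), rfl⟩
  | as0 j => exact ⟨.inr (.inr (.inr (.inr (.inr (.inl j))))), rfl⟩
  | at0 j => exact ⟨.inr (.inr (.inr (.inr (.inr (.inr (.inl j)))))), rfl⟩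
  | s0y i => exact ⟨.inr (.inr (.inr (.inr (.inr (.inr (.inr (.inl i))))))), rfl⟩
  | zt0 i => exact ⟨.inr (.inr (.inr (.inr (.inr (.inr (.inr (.inr (.inl i)))))))), rfl⟩
  | as1 j => exact ⟨.inr (.inr (.inr (.inr (.inr (.inr (.inr (.inr (.inr (.inl j))))))))), rfl⟩
  | at1 j => exact ⟨.inr (.inr (.inr (.inr (.inr (.inr (.inr (.inr (.inr (.inr (.inl j)))))))))), rfl⟩
  | s1y i => exact ⟨.inr (.inr (.inr (.inr (.inr (.inr (.inr (.inr (.inr (.inr (.inr (.inl i))))))))))), rfl⟩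
  | zt1 i => exact ⟨.inr (.inr (.inr (.inr (.inr (.inr (.inr (.inr (.inr (.inr (.inr (.inr (.inl i)))))))))))), rfl⟩
  | ast j => exact ⟨.inr (.inr (.inr (.inr (.inr (.inr (.inr (.inr (.inr (.inr (.inr (.inr (.inr j)))))))))))), rfl⟩

noncomputable instance : Fintype (CArc n r ℓ) := Fintype.ofFinite _

@[simp] theorem cD_tail_as : (cD n r ℓ).tail .as = CNode.s := rfl
@[simp] theorem cD_tail_at' : (cD n r ℓ).tail .at' = CNode.v (Fin.last n) := rfl
@[simp] theorem cD_tail_vy (i : Fin n) (b : Bool) : (cD n r ℓ).tail (.vy i b) = CNode.v i.castSucc := rfl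
@[simp] theorem cD_tail_yz (i : Fin n) (b : Bool) : (cD n r ℓ).tail (.yz i b) = CNode.y i b := rfl
@[simp] theorem cD_tail_zv (i : Fin n) (b : Bool) : (cD n r ℓ).tail (.zv i b) = CNode.z i b := rfl
@[simp] theorem cD_tail_as0 (j : Fin r) : (cD n r ℓ).tail (.as0 j) = CNode.s := rfl
@[simp] theorem cD_tail_at0 (j : Fin r) : (cD n r ℓ).tail (.at0 j) = CNode.t0 := rfl
@[simp] theorem cD_tail_s0y (i : Fin n) : (cD n r ℓ).tail (.s0y i) = CNode.s0 := rfl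
@[simp] theorem cD_tail_zt0 (i : Fin n) : (cD n r ℓ).tail (.zt0 i) = CNode.z i false := rfl
@[simp] theorem cD_tail_as1 (j : Fin (n - r)) : (cD n r ℓ).tail (.as1 j) = CNode.s := rfl
@[simp] theorem cD_tail_at1 (j : Fin (n - r)) : (cD n r ℓ).tail (.at1 j) = CNode.t1 := rfl
@[simp] theorem cD_tail_s1y (i : Fin n) : (cD n r ℓ).tail (.s1y i) = CNode.s1 := rfl
@[simp] theorem cD_tail_zt1 (i : Fin n) : (cD n r ℓ).tail (.zt1 i) = CNode.z i true := rfl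
@[simp] theorem cD_tail_ast (j : Fin (ℓ - 1)) : (cD n r ℓ).tail (.ast j) = CNode.s := rfl

@[simp] theorem cD_head_as : (cD n r ℓ).head .as = CNode.v 0 := rfl
@[simp] theorem cD_head_at' : (cD n r ℓ).head .at' = CNode.t := rfl
@[simp] theorem cD_head_vy (i : Fin n) (b : Bool) : (cD n r ℓ).head (.vy i b) = CNode.y i b := rfl
@[simp] theorem cD_head_yz (i : Fin n) (b : Bool) : (cD n r ℓ).head (.yz i b) = CNode.z i b := rfl
@[simp] theorem cD_head_zv (i : Fin n) (b : Bool) : (cD n r ℓ).head (.zv i b) = CNode.v i.succ := rfl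
@[simp] theorem cD_head_as0 (j : Fin r) : (cD n r ℓ).head (.as0 j) = CNode.s0 := rfl
@[simp] theorem cD_head_at0 (j : Fin r) : (cD n r ℓ).head (.at0 j) = CNode.t := rfl
@[simp] theorem cD_head_s0y (i : Fin n) : (cD n r ℓ).head (.s0y i) = CNode.y i false := rfl
@[simp] theorem cD_head_zt0 (i : Fin n) : (cD n r ℓ).head (.zt0 i) = CNode.t0 := rfl
@[simp] theorem cD_head_as1 (j : Fin (n - r)) : (cD n r ℓ).head (.as1 j) = CNode.s1 := rfl
@[simp] theorem cD_head_at1 (j : Fin (n - r)) : (cD n r ℓ).head (.at1 j) = CNode.t := rfl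
@[simp] theorem cD_head_s1y (i : Fin n) : (cD n r ℓ).head (.s1y i) = CNode.y i true := rfl
@[simp] theorem cD_head_zt1 (i : Fin n) : (cD n r ℓ).head (.zt1 i) = CNode.t1 := rfl
@[simp] theorem cD_head_ast (j : Fin (ℓ - 1)) : (cD n r ℓ).head (.ast j) = CNode.t := rfl

-- classification lemmas
theorem CIA.tail_s_cases {d : CArc n r ℓ} (h : (cD n r ℓ).tail d = CNode.s) :
    d = CArc.as ∨ (∃ j, d = CArc.as0 j) ∨ (∃ j, d = CArc.as1 j) ∨ (∃ j, d = CArc.ast j) := by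
  cases d <;> simp_all

theorem CIA.tail_s0_cases {d : CArc n r ℓ} (h : (cD n r ℓ).tail d = CNode.s0) :
    ∃ i, d = CArc.s0y i := by
  cases d <;> simp_all

theorem CIA.tail_s1_cases {d : CArc n r ℓ} (h : (cD n r ℓ).tail d = CNode.s1) :
    ∃ i, d = CArc.s1y i := by
  cases d <;> simp_all

theorem CIA.tail_t0_cases {d : CArc n r ℓ} (h : (cD n r ℓ).tail d = CNode.t0) :
    ∃ j, d = CArc.at0 j := by
  cases d <;> simp_all

theorem CIA.tail_t1_cases {d : CArc n r ℓ} (h : (cD n r ℓ).tail d = CNode.t1) :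
    ∃ j, d = CArc.at1 j := by
  cases d <;> simp_all

theorem CIA.tail_y_cases {d : CArc n r ℓ} {i : Fin n} {b : Bool}
    (h : (cD n r ℓ).tail d = CNode.y i b) : d = CArc.yz i b := by
  cases d <;> simp_all

theorem CIA.tail_z_cases {d : CArc n r ℓ} {i : Fin n} {b : Bool}
    (h : (cD n r ℓ).tail d = CNode.z i b) :
    d = CArc.zv i b ∨ (d = CArc.zt0 i ∧ b = false) ∨ (d = CArc.zt1 i ∧ b = true) := by
  cases d <;> simp_all

theorem CIA.tail_v_cases {d : CArc n r ℓ} {m : Fin (n + 1)}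
    (h : (cD n r ℓ).tail d = CNode.v m) :
    (∃ i b, d = CArc.vy i b ∧ m = i.castSucc) ∨ (d = CArc.at' ∧ m = Fin.last n) := by
  cases d <;> simp_all <;> tauto

theorem CIA.head_y_cases {d : CArc n r ℓ} {i : Fin n} {b : Bool}
    (h : (cD n r ℓ).head d = CNode.y i b) :
    d = CArc.vy i b ∨ (d = CArc.s0y i ∧ b = false) ∨ (d = CArc.s1y i ∧ b = true) := by
  cases d <;> simp_all

theorem CIA.head_s0_cases {d : CArc n r ℓ} (h : (cD n r ℓ).head d = CNode.s0) :
    ∃ j, d = CArc.as0 j := by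
  cases d <;> simp_all

theorem CIA.head_s1_cases {d : CArc n r ℓ} (h : (cD n r ℓ).head d = CNode.s1) :
    ∃ j, d = CArc.as1 j := by
  cases d <;> simp_all

end CIArc
section CIPstruct
open MultiDigraph

variable {n r ℓ : ℕ} {P' : List (CArc n r ℓ)}

theorem CIA.not_mem_as0 (hp : (cD n r ℓ).IsPath CNode.s CNode.t P')
    (hPas : CArc.as ∈ P') (j : Fin r) : CArc.as0 j ∉ P' := by
  intro h
  have := CIA.tail_injOn hp h hPas (by simp)
  simp at this

theorem CIA.not_mem_as1 (hp : (cD n r ℓ).IsPath CNode.s CNode.t P')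
    (hPas : CArc.as ∈ P') (j : Fin (n - r)) : CArc.as1 j ∉ P' := by
  intro h
  have := CIA.tail_injOn hp h hPas (by simp)
  simp at this

theorem CIA.not_mem_s0y (hp : (cD n r ℓ).IsPath CNode.s CNode.t P')
    (hPas : CArc.as ∈ P') (i : Fin n) : CArc.s0y i ∉ P' := by
  intro h
  obtain ⟨e, he, hee⟩ := CIA.exists_pred hp h (by simp)
  simp only [cD_tail_s0y] at hee
  obtain ⟨j, rfl⟩ := CIA.head_s0_cases hee
  exact CIA.not_mem_as0 hp hPas j he

theorem CIA.not_mem_s1y (hp : (cD n r ℓ).IsPath CNode.s CNode.t P')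
    (hPas : CArc.as ∈ P') (i : Fin n) : CArc.s1y i ∉ P' := by
  intro h
  obtain ⟨e, he, hee⟩ := CIA.exists_pred hp h (by simp)
  simp only [cD_tail_s1y] at hee
  obtain ⟨j, rfl⟩ := CIA.head_s1_cases hee
  exact CIA.not_mem_as1 hp hPas j he

theorem CIA.not_mem_zt0 (hp : (cD n r ℓ).IsPath CNode.s CNode.t P')
    (hPat : CArc.at' ∈ P') (i : Fin n) : CArc.zt0 i ∉ P' := by
  intro h
  obtain ⟨e, he, hee⟩ := CIA.exists_succ hp h (by simp)
  simp only [cD_head_zt0] at hee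
  obtain ⟨j, rfl⟩ := CIA.tail_t0_cases hee
  have : CArc.at0 j = CArc.at' := CIA.head_t_unique hp he hPat (by simp) (by simp)
  simp at this

theorem CIA.not_mem_zt1 (hp : (cD n r ℓ).IsPath CNode.s CNode.t P')
    (hPat : CArc.at' ∈ P') (i : Fin n) : CArc.zt1 i ∉ P' := by
  intro h
  obtain ⟨e, he, hee⟩ := CIA.exists_succ hp h (by simp)
  simp only [cD_head_zt1] at hee
  obtain ⟨j, rfl⟩ := CIA.tail_t1_cases hee
  have : CArc.at1 j = CArc.at' := CIA.head_t_unique hp he hPat (by simp) (by simp)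
  simp at this

theorem CIA.block_step (hp : (cD n r ℓ).IsPath CNode.s CNode.t P')
    (hPat : CArc.at' ∈ P') {c : CArc n r ℓ} (hc : c ∈ P') {i : Fin n}
    (hhead : (cD n r ℓ).head c = CNode.v i.castSucc) :
    ∃ b, CArc.vy i b ∈ P' ∧ CArc.yz i b ∈ P' ∧ CArc.zv i b ∈ P' := by
  obtain ⟨d, hd, hdt⟩ := CIA.exists_succ hp hc (by rw [hhead]; simp)
  rw [hhead] at hdt
  rcases CIA.tail_v_cases hdt with ⟨i', b, rfl, he⟩ | ⟨rfl, he⟩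
  · have hii : i' = i := Fin.castSucc_injective n he.symm
    subst hii
    obtain ⟨e, he', het⟩ := CIA.exists_succ hp hd (by simp)
    simp only [cD_head_vy] at het
    obtain rfl := CIA.tail_y_cases het
    obtain ⟨f, hf, hft⟩ := CIA.exists_succ hp he' (by simp)
    simp only [cD_head_yz] at hft
    rcases CIA.tail_z_cases hft with rfl | ⟨rfl, hb⟩ | ⟨rfl, hb⟩
    · exact ⟨b, hd, he', hf⟩
    · exact absurd hf (CIA.not_mem_zt0 hp hPat i')
    · exact absurd hf (CIA.not_mem_zt1 hp hPat i')
  · exact absurd he (Fin.castSucc_lt_last i).ne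

theorem CIA.blocks (hp : (cD n r ℓ).IsPath CNode.s CNode.t P')
    (hPas : CArc.as ∈ P') (hPat : CArc.at' ∈ P') :
    ∀ i : Fin n, ∃ b, CArc.vy i b ∈ P' ∧ CArc.yz i b ∈ P' ∧ CArc.zv i b ∈ P' := by
  have main : ∀ k (hk : k < n), ∃ b, CArc.vy ⟨k, hk⟩ b ∈ P' ∧ CArc.yz ⟨k, hk⟩ b ∈ P' ∧
      CArc.zv ⟨k, hk⟩ b ∈ P' := by
    intro k
    induction k with
    | zero =>
      intro hk
      apply CIA.block_step hp hPat hPas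
      simp [Fin.ext_iff]
    | succ m ih =>
      intro hk
      obtain ⟨b, _, _, hzv⟩ := ih (by omega)
      apply CIA.block_step hp hPat hzv
      simp [Fin.ext_iff]
  intro i
  have := main i.val i.isLt
  simpa using this

theorem CIA.side_unique (hp : (cD n r ℓ).IsPath CNode.s CNode.t P')
    (hPas : CArc.as ∈ P') {i : Fin n} {b b' : Bool}
    (h1 : CArc.yz i b ∈ P') (h2 : CArc.yz i b' ∈ P') : b = b' := by
  have hv : ∀ bb, CArc.yz i bb ∈ P' → CArc.vy i bb ∈ P' := by
    intro bb hbb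
    obtain ⟨e, he, hee⟩ := CIA.exists_pred hp hbb (by simp)
    simp only [cD_tail_yz] at hee
    rcases CIA.head_y_cases hee with rfl | ⟨rfl, hb⟩ | ⟨rfl, hb⟩
    · exact he
    · exact absurd he (CIA.not_mem_s0y hp hPas i)
    · exact absurd he (CIA.not_mem_s1y hp hPas i)
  have := CIA.tail_injOn hp (hv b h1) (hv b' h2) (by simp)
  simpa using this

theorem CIA.s0_chain {q : List (CArc n r ℓ)} (hq : (cD n r ℓ).IsPath CNode.s CNode.t q)
    {j : Fin r} (hj : CArc.as0 j ∈ q) : ∃ i, CArc.yz i false ∈ q := by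
  obtain ⟨d, hd, hdt⟩ := CIA.exists_succ hq hj (by simp)
  simp only [cD_head_as0] at hdt
  obtain ⟨i, rfl⟩ := CIA.tail_s0_cases hdt
  obtain ⟨e, he, het⟩ := CIA.exists_succ hq hd (by simp)
  simp only [cD_head_s0y] at het
  obtain rfl := CIA.tail_y_cases het
  exact ⟨i, he⟩

theorem CIA.s1_chain {q : List (CArc n r ℓ)} (hq : (cD n r ℓ).IsPath CNode.s CNode.t q)
    {j : Fin (n - r)} (hj : CArc.as1 j ∈ q) : ∃ i, CArc.yz i true ∈ q := by
  obtain ⟨d, hd, hdt⟩ := CIA.exists_succ hq hj (by simp)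
  simp only [cD_head_as1] at hdt
  obtain ⟨i, rfl⟩ := CIA.tail_s1_cases hdt
  obtain ⟨e, he, het⟩ := CIA.exists_succ hq hd (by simp)
  simp only [cD_head_s1y] at het
  obtain rfl := CIA.tail_y_cases het
  exact ⟨i, he⟩

end CIPstruct

section CIOsum
variable {n r ℓ : ℕ}

def CIA.osum (n r ℓ : ℕ) : (Unit ⊕ Fin r ⊕ Fin (n - r) ⊕ Fin (ℓ - 1)) → CArc n r ℓ :=
  Sum.elim (fun _ => CArc.as) (Sum.elim CArc.as0 (Sum.elim CArc.as1 CArc.ast))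

theorem CIA.osum_inj : Function.Injective (CIA.osum n r ℓ) := by
  rintro (a | a | a | a) (b | b | b | b) h <;> simp [CIA.osum] at h <;> simp_all

end CIOsum

/-- In the clique-interdiction flow construction: for every `x ∈ X*`
and every flow-carrying path `P'` containing `a_s` and `a_t`, the vertex set
`R := {v : a_v¹ ∈ P'}` has cardinality `r` and intersects every clique of `G` of
size `ℓ`. -/
theorem cliqueInterdiction_interdicting_set
    (n r ℓ : ℕ) (hℓ : 1 ≤ ℓ) (hr : r ≤ n) (G : SimpleGraph (Fin n))
    (x : List (CArc n r ℓ) → ℚ) (hx : memXstar n r ℓ G x)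
    (P' : List (CArc n r ℓ)) (hP'path : (cD n r ℓ).IsPath CNode.s CNode.t P')
    (hP'flow : x P' = 1) (hPas : CArc.as ∈ P') (hPat : CArc.at' ∈ P') :
    {v : Fin n | CArc.yz v true ∈ P'}.ncard = r ∧
    ∀ C : Finset (Fin n), G.IsClique (C : Set (Fin n)) → C.card = ℓ →
      ∃ v ∈ C, CArc.yz v true ∈ P' := by
  classical
  obtain ⟨⟨hxnn, hxpath, hxcap⟩, hxint, hxval, hxloss⟩ := hx
  -- finiteness of the path set
  have hTfin : ((cD n r ℓ).pathSet CNode.s CNode.t).Finite := by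
    apply (List.finite_length_le (CArc n r ℓ) (Fintype.card (CArc n r ℓ))).subset
    intro p hp
    have hnd : p.Nodup := List.Nodup.of_map _ (CIA.nodup_tails hp)
    exact hnd.length_le_card
  set T : Finset (List (CArc n r ℓ)) := hTfin.toFinset with hTdef
  set F : Finset (List (CArc n r ℓ)) := T.filter (fun p => x p ≠ 0) with hFdef
  have hFmem : ∀ p : List (CArc n r ℓ),
      p ∈ F ↔ ((cD n r ℓ).IsPath CNode.s CNode.t p ∧ x p ≠ 0) := by
    intro p
    rw [hFdef, Finset.mem_filter, hTdef, Set.Finite.mem_toFinset]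
    rfl
  have hFpath : ∀ p ∈ F, (cD n r ℓ).IsPath CNode.s CNode.t p :=
    fun p hp => ((hFmem p).mp hp).1
  -- capacity, Finset version
  have hWfin : ∀ a : CArc n r ℓ,
      {p : List (CArc n r ℓ) | (cD n r ℓ).IsPath CNode.s CNode.t p ∧ a ∈ p}.Finite :=
    fun a => hTfin.subset (fun p h => h.1)
  have hcapF : ∀ a : CArc n r ℓ, ∑ p ∈ (hWfin a).toFinset, x p ≤ 1 := by
    intro a
    have h := hxcap a
    rw [← Set.Finite.coe_toFinset (hWfin a), finsum_mem_coe_finset] at h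
    simpa using h
  have hxle1 : ∀ p, (cD n r ℓ).IsPath CNode.s CNode.t p → x p ≤ 1 := by
    intro p hp
    obtain ⟨a, ha, hta⟩ := CIA.first_arc hp
    have hmem : p ∈ (hWfin a).toFinset := (Set.Finite.mem_toFinset _).mpr ⟨hp, ha⟩
    calc x p ≤ ∑ q ∈ (hWfin a).toFinset, x q :=
          Finset.single_le_sum (fun q _ => hxnn q) hmem
      _ ≤ 1 := hcapF a
  have hone : ∀ p ∈ F, x p = 1 := by
    intro p hpF
    obtain ⟨hp, hne⟩ := (hFmem p).mp hpF
    obtain ⟨zp, hzp⟩ := hxint p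
    have h0 : (0 : ℚ) ≤ (zp : ℚ) := hzp ▸ hxnn p
    have h1 : (zp : ℚ) ≤ 1 := hzp ▸ hxle1 p hp
    have h0' : (0 : ℤ) ≤ zp := by exact_mod_cast h0
    have h1' : zp ≤ (1 : ℤ) := by exact_mod_cast h1
    have hz0 : zp ≠ 0 := by
      rintro rfl
      simp at hzp
      exact hne hzp
    have : zp = 1 := by omega
    rw [hzp, this]
    norm_num
  have hcap1 : ∀ (a : CArc n r ℓ), ∀ p ∈ F, ∀ q ∈ F, a ∈ p → a ∈ q → p = q := by
    intro a p hpF q hqF hap haq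
    by_contra hne
    have hsub : ({p, q} : Finset (List (CArc n r ℓ))) ⊆ (hWfin a).toFinset := by
      intro z hz
      rcases Finset.mem_insert.mp hz with h | h
      · rw [h]
        exact (Set.Finite.mem_toFinset _).mpr ⟨hFpath p hpF, hap⟩
      · rw [Finset.mem_singleton] at h
        rw [h]
        exact (Set.Finite.mem_toFinset _).mpr ⟨hFpath q hqF, haq⟩
    have hle : x p + x q ≤ ∑ z ∈ (hWfin a).toFinset, x z := by
      rw [← Finset.sum_pair hne]
      exact Finset.sum_le_sum_of_subset_of_nonneg hsub (fun z _ _ => hxnn z)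
    rw [hone p hpF, hone q hqF] at hle
    have := le_trans hle (hcapF a)
    norm_num at this
  -- cardinality of F
  have hcard : F.card = n + ℓ := by
    have hv := hxval
    rw [MultiDigraph.value] at hv
    rw [← Set.Finite.coe_toFinset hTfin, finsum_mem_coe_finset, ← hTdef] at hv
    rw [← Finset.sum_filter_ne_zero T, ← hFdef] at hv
    have hsum : ∑ p ∈ F, x p = (F.card : ℚ) := by
      rw [Finset.sum_congr rfl hone]
      simp
    rw [hsum] at hv
    exact_mod_cast hv
  have hP'F : P' ∈ F := (hFmem P').mpr ⟨hP'path, by rw [hP'flow]; norm_num⟩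
  -- first arcs
  have hfa : ∀ p : List (CArc n r ℓ), ∃ a, p ∈ F → (a ∈ p ∧ (cD n r ℓ).tail a = CNode.s) := by
    intro p
    by_cases hpF : p ∈ F
    · obtain ⟨a, ha, hta⟩ := CIA.first_arc (hFpath p hpF)
      exact ⟨a, fun _ => ⟨ha, hta⟩⟩
    · exact ⟨CArc.as, fun h => absurd h hpF⟩
  choose g hg using hfa
  -- out-arcs of s
  have hosuminj : Function.Injective (CIA.osum n r ℓ) := CIA.osum_inj
  set outS : Finset (CArc n r ℓ) := Finset.univ.image (CIA.osum n r ℓ) with houtS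
  have houtcard : outS.card = n + ℓ := by
    rw [houtS, Finset.card_image_of_injective _ hosuminj]
    simp
    omega
  have hginj : Set.InjOn g ↑F := by
    intro p hp q hq hgpq
    exact hcap1 (g p) p hp q hq (hg p hp).1 (hgpq ▸ (hg q hq).1)
  have himg : F.image g = outS := by
    apply Finset.eq_of_subset_of_card_le
    · intro a ha
      obtain ⟨p, hpF, rfl⟩ := Finset.mem_image.mp ha
      obtain ⟨hgp, hgs⟩ := hg p hpF
      rcases CIA.tail_s_cases hgs with h | ⟨j, h⟩ | ⟨j, h⟩ | ⟨j, h⟩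
      · rw [h, houtS]
        exact Finset.mem_image.mpr ⟨Sum.inl (), Finset.mem_univ _, rfl⟩
      · rw [h, houtS]
        exact Finset.mem_image.mpr ⟨Sum.inr (Sum.inl j), Finset.mem_univ _, rfl⟩
      · rw [h, houtS]
        exact Finset.mem_image.mpr ⟨Sum.inr (Sum.inr (Sum.inl j)), Finset.mem_univ _, rfl⟩
      · rw [h, houtS]
        exact Finset.mem_image.mpr ⟨Sum.inr (Sum.inr (Sum.inr j)), Finset.mem_univ _, rfl⟩
    · rw [houtcard, Finset.card_image_of_injOn hginj, hcard]
  have hsurj : ∀ a ∈ outS, ∃ p, p ∈ F ∧ a ∈ p := by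
    intro a ha
    rw [← himg] at ha
    obtain ⟨p, hpF, rfl⟩ := Finset.mem_image.mp ha
    exact ⟨p, hpF, (hg p hpF).1⟩
  have has0 : ∀ j : Fin r, ∃ p, p ∈ F ∧ CArc.as0 j ∈ p := by
    intro j
    apply hsurj
    rw [houtS]
    exact Finset.mem_image.mpr ⟨Sum.inr (Sum.inl j), Finset.mem_univ _, rfl⟩
  have has1 : ∀ j : Fin (n - r), ∃ p, p ∈ F ∧ CArc.as1 j ∈ p := by
    intro j
    apply hsurj
    rw [houtS]
    exact Finset.mem_image.mpr ⟨Sum.inr (Sum.inr (Sum.inl j)), Finset.mem_univ _, rfl⟩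
  choose p0 hp0F hp0mem using has0
  choose p1 hp1F hp1mem using has1
  have hp0path : ∀ j, (cD n r ℓ).IsPath CNode.s CNode.t (p0 j) := fun j => hFpath _ (hp0F j)
  have hp1path : ∀ j, (cD n r ℓ).IsPath CNode.s CNode.t (p1 j) := fun j => hFpath _ (hp1F j)
  choose φ0 hφ0 using fun j => CIA.s0_chain (hp0path j) (hp0mem j)
  choose φ1 hφ1 using fun j => CIA.s1_chain (hp1path j) (hp1mem j)
  have hp0ne : ∀ j, p0 j ≠ P' := by
    intro j h
    exact CIA.not_mem_as0 hP'path hPas j (h ▸ hp0mem j)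
  have hp1ne : ∀ j, p1 j ≠ P' := by
    intro j h
    exact CIA.not_mem_as1 hP'path hPas j (h ▸ hp1mem j)
  set Rf : Finset (Fin n) := Finset.univ.filter (fun i => CArc.yz i true ∈ P') with hRf
  have hblocks := CIA.blocks hP'path hPas hPat
  have hφ0R : ∀ j, φ0 j ∈ Rf := by
    intro j
    have hnotP : CArc.yz (φ0 j) false ∉ P' := by
      intro h
      exact hp0ne j (hcap1 _ _ (hp0F j) _ hP'F (hφ0 j) h)
    obtain ⟨b, _, hyz, _⟩ := hblocks (φ0 j)
    have hb : b = true := by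
      cases b
      · exact absurd hyz hnotP
      · rfl
    subst hb
    rw [hRf]
    simp only [Finset.mem_filter, Finset.mem_univ, true_and]
    exact hyz
  have hφ0inj : Function.Injective φ0 := by
    intro j j' h
    have h1 := hφ0 j
    rw [h] at h1
    have hpq : p0 j = p0 j' := hcap1 _ _ (hp0F j) _ (hp0F j') h1 (hφ0 j')
    have := CIA.tail_injOn (hp0path j') (hpq ▸ hp0mem j) (hp0mem j') (by simp)
    simpa using this
  have hφ1Rc : ∀ j, CArc.yz (φ1 j) true ∉ P' := by
    intro j h
    exact hp1ne j (hcap1 _ _ (hp1F j) _ hP'F (hφ1 j) h)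
  have hφ1inj : Function.Injective φ1 := by
    intro j j' h
    have h1 := hφ1 j
    rw [h] at h1
    have hpq : p1 j = p1 j' := hcap1 _ _ (hp1F j) _ (hp1F j') h1 (hφ1 j')
    have := CIA.tail_injOn (hp1path j') (hpq ▸ hp1mem j) (hp1mem j') (by simp)
    simpa using this
  have h0sub : Finset.univ.image φ0 ⊆ Rf := by
    intro i hi
    obtain ⟨j, _, rfl⟩ := Finset.mem_image.mp hi
    exact hφ0R j
  have h1sub : Finset.univ.image φ1 ⊆ Rfᶜ := by
    intro i hi
    obtain ⟨j, _, rfl⟩ := Finset.mem_image.mp hi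
    rw [Finset.mem_compl, hRf]
    simp only [Finset.mem_filter, Finset.mem_univ, true_and]
    exact hφ1Rc j
  have hRn : Rf.card ≤ n := by
    calc Rf.card ≤ (Finset.univ : Finset (Fin n)).card := Finset.card_le_univ _
      _ = n := by simp
  have hcompl : Rfᶜ.card = n - Rf.card := by
    rw [Finset.card_compl]
    simp
  have c0 : r ≤ Rf.card := by
    calc r = (Finset.univ.image φ0).card := by
          rw [Finset.card_image_of_injective _ hφ0inj]; simp
      _ ≤ Rf.card := Finset.card_le_card h0sub
  have c1 : n - r ≤ Rfᶜ.card := by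
    calc n - r = (Finset.univ.image φ1).card := by
          rw [Finset.card_image_of_injective _ hφ1inj]; simp
      _ ≤ Rfᶜ.card := Finset.card_le_card h1sub
  have hcardR : Rf.card = r := by omega
  constructor
  · have hset : {v : Fin n | CArc.yz v true ∈ P'} = ↑Rf := by
      ext v
      rw [hRf]
      simp
    rw [hset, Set.ncard_coe_finset, hcardR]
  · -- second part
    intro C hC hCcard
    by_contra hcon
    push_neg at hcon
    have hI1 : Finset.univ.image φ1 = Rfᶜ := by
      apply Finset.eq_of_subset_of_card_le h1sub
      rw [hcompl, hcardR, Finset.card_image_of_injective _ hφ1inj]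
      simp
    set cnt : List (CArc n r ℓ) → ℕ :=
      fun p => (Finset.univ.filter (fun ib : Fin n × Bool => CArc.yz ib.1 ib.2 ∈ p)).card
      with hcnt
    have hcntP' : cnt P' = n := by
      simp only [hcnt]
      have hbij : (Finset.univ.filter
          (fun ib : Fin n × Bool => CArc.yz ib.1 ib.2 ∈ P')).card
          = (Finset.univ : Finset (Fin n)).card := by
        apply Finset.card_bij (fun ib _ => ib.1)
        · intro a ha
          exact Finset.mem_univ _
        · rintro ⟨i, b⟩ hib ⟨i', b'⟩ hib' h
          simp only [Finset.mem_filter, Finset.mem_univ, true_and] at hib hib'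
          simp only at h
          subst h
          have := CIA.side_unique hP'path hPas hib hib'
          subst this
          rfl
        · intro i _
          obtain ⟨b, _, hyz, _⟩ := hblocks i
          exact ⟨(i, b), by simp only [Finset.mem_filter, Finset.mem_univ, true_and]; exact hyz, rfl⟩
      rw [hbij]
      simp
    have hA : ∑ p ∈ F, cnt p ≤ 2 * n := by
      have hswap : ∑ p ∈ F, cnt p = ∑ ib ∈ (Finset.univ : Finset (Fin n × Bool)),
          (F.filter (fun p => CArc.yz ib.1 ib.2 ∈ p)).card := by
        simp only [hcnt, Finset.card_filter]
        exact Finset.sum_comm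
      rw [hswap]
      have hle1 : ∀ ib : Fin n × Bool,
          (F.filter (fun p => CArc.yz ib.1 ib.2 ∈ p)).card ≤ 1 := by
        intro ib
        rw [Finset.card_le_one]
        intro p hp q hq
        rw [Finset.mem_filter] at hp hq
        exact hcap1 _ _ hp.1 _ hq.1 hp.2 hq.2
      calc ∑ ib ∈ (Finset.univ : Finset (Fin n × Bool)),
            (F.filter (fun p => CArc.yz ib.1 ib.2 ∈ p)).card
          ≤ ∑ _ib ∈ (Finset.univ : Finset (Fin n × Bool)), 1 :=
            Finset.sum_le_sum (fun ib _ => hle1 ib)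
        _ = 2 * n := by simp [mul_comm]
    set F01 : Finset (List (CArc n r ℓ)) :=
      F.filter (fun p => (∃ j, CArc.as0 j ∈ p) ∨ (∃ j, CArc.as1 j ∈ p)) with hF01
    have hp0F01 : ∀ j, p0 j ∈ F01 := by
      intro j
      rw [hF01, Finset.mem_filter]
      exact ⟨hp0F j, Or.inl ⟨j, hp0mem j⟩⟩
    have hp1F01 : ∀ j, p1 j ∈ F01 := by
      intro j
      rw [hF01, Finset.mem_filter]
      exact ⟨hp1F j, Or.inr ⟨j, hp1mem j⟩⟩
    have hF01card : F01.card = n := by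
      have hbij : (Finset.univ : Finset (Fin r ⊕ Fin (n - r))).card = F01.card := by
        apply Finset.card_bij (fun a _ => Sum.elim p0 p1 a)
        · rintro (j | j) _
          · exact hp0F01 j
          · exact hp1F01 j
        · rintro (j | j) _ (j' | j') _ h <;> simp only [Sum.elim_inl, Sum.elim_inr] at h
          · have := CIA.tail_injOn (hp0path j') (h ▸ hp0mem j) (hp0mem j') (by simp)
            simp at this
            rw [this]
          · exfalso
            have := CIA.tail_injOn (hp1path j') (h ▸ hp0mem j) (hp1mem j') (by simp)
            simp at this
          · exfalso
            have := CIA.tail_injOn (hp0path j') (h ▸ hp1mem j) (hp0mem j') (by simp)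
            simp at this
          · have := CIA.tail_injOn (hp1path j') (h ▸ hp1mem j) (hp1mem j') (by simp)
            simp at this
            rw [this]
        · intro p hpF01
          rw [hF01, Finset.mem_filter] at hpF01
          obtain ⟨hpF, hj | hj⟩ := hpF01
          · obtain ⟨j, hjm⟩ := hj
            exact ⟨Sum.inl j, Finset.mem_univ _, hcap1 _ _ (hp0F j) _ hpF (hp0mem j) hjm⟩
          · obtain ⟨j, hjm⟩ := hj
            exact ⟨Sum.inr j, Finset.mem_univ _, hcap1 _ _ (hp1F j) _ hpF (hp1mem j) hjm⟩
      rw [← hbij]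
      simp
      omega
    have hP'notF01 : P' ∉ F01 := by
      rw [hF01, Finset.mem_filter]
      rintro ⟨-, ⟨j, hj⟩ | ⟨j, hj⟩⟩
      · exact CIA.not_mem_as0 hP'path hPas j hj
      · exact CIA.not_mem_as1 hP'path hPas j hj
    have hC1 : ∀ p ∈ F01, 1 ≤ cnt p := by
      intro p hp
      rw [hF01, Finset.mem_filter] at hp
      obtain ⟨hpF, h⟩ := hp
      have hpath := hFpath p hpF
      obtain ⟨i, b, hib⟩ : ∃ i b, CArc.yz i b ∈ p := by
        rcases h with ⟨j, hj⟩ | ⟨j, hj⟩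
        · obtain ⟨i, hi⟩ := CIA.s0_chain hpath hj
          exact ⟨i, false, hi⟩
        · obtain ⟨i, hi⟩ := CIA.s1_chain hpath hj
          exact ⟨i, true, hi⟩
      simp only [hcnt]
      apply Finset.card_pos.mpr
      exact ⟨(i, b), by simp only [Finset.mem_filter, Finset.mem_univ, true_and]; exact hib⟩
    have hsumF01 : ∑ p ∈ F01, cnt p ≤ n := by
      have hins : insert P' F01 ⊆ F := by
        intro p hp
        rcases Finset.mem_insert.mp hp with rfl | hp
        · exact hP'F
        · rw [hF01] at hp
          exact Finset.filter_subset _ _ hp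
      have hle : ∑ p ∈ insert P' F01, cnt p ≤ ∑ p ∈ F, cnt p :=
        Finset.sum_le_sum_of_subset hins
      rw [Finset.sum_insert hP'notF01, hcntP'] at hle
      omega
    have hcnt1 : ∀ p ∈ F01, cnt p = 1 := by
      intro p hp
      by_contra hne
      have h2 : 2 ≤ cnt p := by
        have := hC1 p hp
        omega
      have hlt : ∑ q ∈ F01, (1 : ℕ) < ∑ q ∈ F01, cnt q :=
        Finset.sum_lt_sum hC1 ⟨p, hp, by omega⟩
      rw [Finset.sum_const, smul_eq_mul, mul_one, hF01card] at hlt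
      omega
    -- the paths covering C
    have hpvex : ∀ v : Fin n, ∃ p, v ∈ C → (p ∈ F01 ∧ CArc.yz v true ∈ p) := by
      intro v
      by_cases hv : v ∈ C
      · have hvRc : v ∈ Rfᶜ := by
          rw [Finset.mem_compl, hRf]
          simp only [Finset.mem_filter, Finset.mem_univ, true_and]
          exact hcon v hv
        rw [← hI1] at hvRc
        obtain ⟨j, _, rfl⟩ := Finset.mem_image.mp hvRc
        exact ⟨p1 j, fun _ => ⟨hp1F01 j, hφ1 j⟩⟩
      · exact ⟨[], fun h => absurd h hv⟩
    choose pv hpv using hpvex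
    have hpvinj : Set.InjOn pv ↑C := by
      intro v hv w hw h
      by_contra hvw
      obtain ⟨hv1, hv2⟩ := hpv v hv
      obtain ⟨hw1, hw2⟩ := hpv w hw
      have hsub : ({(v, true), (w, true)} : Finset (Fin n × Bool)) ⊆
          Finset.univ.filter (fun ib : Fin n × Bool => CArc.yz ib.1 ib.2 ∈ pv v) := by
        intro ib hib
        simp only [Finset.mem_insert, Finset.mem_singleton] at hib
        rcases hib with rfl | rfl
        · simp only [Finset.mem_filter, Finset.mem_univ, true_and]
          exact hv2
        · simp only [Finset.mem_filter, Finset.mem_univ, true_and]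
          rw [h]
          exact hw2
      have h2 : 2 ≤ cnt (pv v) := by
        have hpair : ({(v, true), (w, true)} : Finset (Fin n × Bool)).card = 2 := by
          rw [Finset.card_insert_of_notMem (by simp [hvw]), Finset.card_singleton]
        simp only [hcnt]
        calc 2 = ({(v, true), (w, true)} : Finset (Fin n × Bool)).card := hpair.symm
          _ ≤ _ := Finset.card_le_card hsub
      rw [hcnt1 _ hv1] at h2
      omega
    -- the failure scenario
    set Sf : Finset (CArc n r ℓ) := insert CArc.as (C.image (fun v => CArc.yz v true)) with hSf
    have hscen : cliqueScenario (cH n r ℓ G) (ℓ + 1) ↑Sf := by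
      refine ⟨Sf.finite_toSet, ?_, ?_⟩
      · rw [Set.ncard_coe_finset]
        have h1 : Sf.card ≤ (C.image (fun v => (CArc.yz v true : CArc n r ℓ))).card + 1 := by
          rw [hSf]
          exact Finset.card_insert_le _ _
        have h2 : (C.image (fun v => (CArc.yz v true : CArc n r ℓ))).card ≤ C.card :=
          Finset.card_image_le
        omega
      · intro a ha b hb hab
        rw [hSf] at ha hb
        simp only [Finset.coe_insert, Set.mem_insert_iff, Finset.coe_image, Set.mem_image,
          Finset.mem_coe] at ha hb
        show (cH n r ℓ G).Adj a b
        rw [cH, SimpleGraph.fromRel_adj]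
        refine ⟨hab, ?_⟩
        rcases ha with rfl | ⟨v, hv, rfl⟩
        · rcases hb with rfl | ⟨w, hw, rfl⟩
          · exact absurd rfl hab
          · exact Or.inl (Or.inr (Or.inl ⟨w, rfl, rfl⟩))
        · rcases hb with rfl | ⟨w, hw, rfl⟩
          · exact Or.inr (Or.inr (Or.inl ⟨v, rfl, rfl⟩))
          · refine Or.inl (Or.inl ⟨v, w, ?_, rfl, rfl⟩)
            apply hC hv hw
            intro hvw
            exact hab (by rw [hvw])
    have hloss := hxloss ↑Sf hscen
    have hWfin2 : {p : List (CArc n r ℓ) | (cD n r ℓ).IsPath CNode.s CNode.t p ∧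
        ∃ a ∈ (↑Sf : Set (CArc n r ℓ)), a ∈ p}.Finite := hTfin.subset (fun p h => h.1)
    rw [MultiDigraph.loss, ← Set.Finite.coe_toFinset hWfin2, finsum_mem_coe_finset] at hloss
    set Q : Finset (List (CArc n r ℓ)) := insert P' (C.image pv) with hQ
    have hQsub : Q ⊆ hWfin2.toFinset := by
      intro p hp
      rw [Set.Finite.mem_toFinset]
      rcases Finset.mem_insert.mp hp with rfl | hp
      · exact ⟨hP'path, CArc.as, by rw [hSf]; simp, hPas⟩
      · obtain ⟨v, hv, rfl⟩ := Finset.mem_image.mp hp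
        obtain ⟨h1, h2⟩ := hpv v hv
        refine ⟨hFpath _ ?_, CArc.yz v true, ?_, h2⟩
        · rw [hF01] at h1
          exact Finset.filter_subset _ _ h1
        · rw [hSf]
          simp only [Finset.coe_insert, Set.mem_insert_iff, Finset.coe_image, Set.mem_image,
            Finset.mem_coe]
          exact Or.inr ⟨v, hv, rfl⟩
    have hQcard : Q.card = ℓ + 1 := by
      have hP'ni : P' ∉ C.image pv := by
        intro h
        obtain ⟨v, hv, hpveq⟩ := Finset.mem_image.mp h
        exact (hcon v hv) (hpveq ▸ (hpv v hv).2)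
      rw [hQ, Finset.card_insert_of_notMem hP'ni, Finset.card_image_of_injOn hpvinj, hCcard]
    have hQone : ∀ p ∈ Q, x p = 1 := by
      intro p hp
      rcases Finset.mem_insert.mp hp with rfl | hp
      · exact hP'flow
      · obtain ⟨v, hv, rfl⟩ := Finset.mem_image.mp hp
        apply hone
        have h1 := (hpv v hv).1
        rw [hF01] at h1
        exact Finset.filter_subset _ _ h1
    have hsumQ : (ℓ : ℚ) + 1 ≤ ∑ p ∈ hWfin2.toFinset, x p := by
      have heq : ∑ p ∈ Q, x p = ((ℓ : ℚ) + 1) := by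
        rw [Finset.sum_congr rfl hQone, Finset.sum_const, hQcard]
        push_cast
        ring
      rw [← heq]
      exact Finset.sum_le_sum_of_subset_of_nonneg hQsub (fun p _ _ => hxnn p)
    linarith
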